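/- arXiv:2601.22193 — 2 statements merged into one kernel-verified Lean document; each statement's English description precedes it below -/
import Mathlib

section
/- Let H and P be phylogenetic trees, let σ be a map from the leaves of P to the leaves of H, and let φ be a reconciliation of (H,P,σ). For all nodes x and y of P, if x is an ancestor of y in P, then G^φ contains a directed path from φ(x) to φ(y). -/
/-- A phylogenetic tree: a finite rooted full binary tree. Every vertex has a `parent`
(the root being its own parent), iterating `parent` from any vertex reaches the root,
and every vertex has either `0` or `2` children. -/
structure PhyloTree (V : Type*) [Fintype V] [DecidableEq V] where
  root : V
  parent : V → V
  parent_root : parent root = root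
  toRoot : ∀ v : V, ∃ n : ℕ, parent^[n] v = root
  binary : ∀ v : V,
      (Finset.univ.filter fun w => parent w = v ∧ w ≠ root).card = 0 ∨
      (Finset.univ.filter fun w => parent w = v ∧ w ≠ root).card = 2

namespace PhyloTree

variable {V : Type*} [Fintype V] [DecidableEq V]

/-- `T.ParentArc a b` : `a` is the parent of `b`; these are the arcs of the tree
(the strict arcs, forming the set `A_par`). -/
def ParentArc (T : PhyloTree V) (a b : V) : Prop :=
  T.parent b = a ∧ b ≠ T.root

/-- `T.Anc a b` : `a` is an ancestor of `b`, equivalently `b` is a descendant of `a`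
(this includes the case `a = b`). -/
def Anc (T : PhyloTree V) (a b : V) : Prop :=
  ∃ n : ℕ, T.parent^[n] b = a

/-- `a` and `b` are incomparable: neither is an ancestor of the other. -/
def Incomp (T : PhyloTree V) (a b : V) : Prop :=
  ¬ T.Anc a b ∧ ¬ T.Anc b a

/-- `a` and `b` are siblings: distinct nodes with the same parent. -/
def Sibling (T : PhyloTree V) (a b : V) : Prop :=
  a ≠ b ∧ a ≠ T.root ∧ b ≠ T.root ∧ T.parent a = T.parent b

/-- `a` and `b` are cousins: their parents are siblings. -/
def Cousin (T : PhyloTree V) (a b : V) : Prop :=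
  a ≠ T.root ∧ b ≠ T.root ∧ T.Sibling (T.parent a) (T.parent b)

/-- A leaf: a node with no children. -/
def IsLeaf (T : PhyloTree V) (a : V) : Prop := ∀ b, ¬ T.ParentArc a b

theorem parentArc_irrefl (T : PhyloTree V) (a : V) : ¬ T.ParentArc a a := by
  rintro ⟨h, hr⟩
  obtain ⟨n, hn⟩ := T.toRoot a
  exact hr ((Function.iterate_fixed h n).symm.trans hn)

/-- The underlying undirected graph of the tree. -/
def ugraph (T : PhyloTree V) : SimpleGraph V where
  Adj a b := T.ParentArc a b ∨ T.ParentArc b a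
  symm := ⟨fun _ _ h => h.symm⟩
  loopless := ⟨fun a h => by
    rcases h with h | h <;> exact T.parentArc_irrefl a h⟩

/-- `T.dist a b` : the number of edges on the unique undirected path between `a` and `b`. -/
noncomputable def dist (T : PhyloTree V) (a b : V) : ℕ := T.ugraph.dist a b

/-- `T.IsLCA c a b` : `c` is the lowest common ancestor of `a` and `b`. -/
def IsLCA (T : PhyloTree V) (c a b : V) : Prop :=
  T.Anc c a ∧ T.Anc c b ∧ ∀ d, T.Anc d a → T.Anc d b → T.Anc d c

/-- The level of a node: `-dist(v, root)`, so nodes closer to the root have higher level. -/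
noncomputable def level (T : PhyloTree V) (v : V) : ℤ := -(T.dist v T.root : ℤ)

/-- Arc `(a,b)` of the digraph `H⁺_d`: either a parent-to-child arc of the tree, or an
arc between distinct incomparable vertices at distance at most `d`. -/
def HplusArc (T : PhyloTree V) (d : ℕ) (a b : V) : Prop :=
  T.ParentArc a b ∨ (a ≠ b ∧ T.Incomp a b ∧ T.dist a b ≤ d)

/-- `(a,b) ∈ A_sib` : arcs (in both directions) between siblings. -/
def SibArc (T : PhyloTree V) (a b : V) : Prop := T.Sibling a b

/-- `(a,b) ∈ A_nep` : arcs (in both directions) between a node and a child of its sibling. -/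
def NepArc (T : PhyloTree V) (a b : V) : Prop :=
  (∃ s, T.Sibling s b ∧ T.ParentArc s a) ∨ (∃ s, T.Sibling s a ∧ T.ParentArc s b)

/-- `(a,b) ∈ A_gnep` : arcs (in both directions) between a node and a grandchild of its
sibling. -/
def GnepArc (T : PhyloTree V) (a b : V) : Prop :=
  (∃ s c, T.Sibling s b ∧ T.ParentArc s c ∧ T.ParentArc c a) ∨
  (∃ s c, T.Sibling s a ∧ T.ParentArc s c ∧ T.ParentArc c b)

/-- `(a,b) ∈ A_cos` : arcs (in both directions) between cousins. -/
def CosArc (T : PhyloTree V) (a b : V) : Prop := T.Cousin a b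

end PhyloTree

/-- A directed cycle in the digraph with arc relation `G`, represented as an injective
cyclic sequence `f` of `n ≥ 2` vertices in which every consecutive arc is present. -/
def IsDicycle {α : Type*} (G : α → α → Prop) {n : ℕ} (f : ZMod n → α) : Prop :=
  2 ≤ n ∧ Function.Injective f ∧ ∀ i, G (f i) (f (i + 1))

/-- There is a directed path from `s` to `t` in the digraph `G` containing at least one
strict arc (i.e. parent-to-child arc of the tree `T`); here strict arcs of the graphs we
consider are always arcs of `G`. -/
def StrictReach {V : Type*} [Fintype V] [DecidableEq V] (T : PhyloTree V)
    (G : V → V → Prop) (s t : V) : Prop :=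
  ∃ a b, Relation.ReflTransGen G s a ∧ T.ParentArc a b ∧ Relation.ReflTransGen G b t

section Reconciliation

variable {VH VP : Type*} [Fintype VH] [DecidableEq VH] [Fintype VP] [DecidableEq VP]

/-- Host-switch event: one of the children's images is incomparable to `hp`, the other is
a descendant of `hp`. -/
def SwitchEvent (TH : PhyloTree VH) (hp h1 h2 : VH) : Prop :=
  (TH.Incomp h1 hp ∧ TH.Anc hp h2) ∨ (TH.Incomp h2 hp ∧ TH.Anc hp h1)

/-- Cospeciation event: the children's images are incomparable with LCA `hp`. -/
def CospEvent (TH : PhyloTree VH) (hp h1 h2 : VH) : Prop :=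
  TH.Incomp h1 h2 ∧ TH.IsLCA hp h1 h2

/-- Duplication event: both children's images are descendants of `hp`, and neither the
host-switch case nor the cospeciation case applies. -/
def DupEvent (TH : PhyloTree VH) (hp h1 h2 : VH) : Prop :=
  TH.Anc hp h1 ∧ TH.Anc hp h2 ∧ ¬ SwitchEvent TH hp h1 h2 ∧ ¬ CospEvent TH hp h1 h2

/-- `φ` is a reconciliation of `(H, P, σ)`: it agrees with `σ` on leaves, and at every
internal node exactly one of the three events (host switch, cospeciation, duplication)
applies. -/
def IsReconciliation (TH : PhyloTree VH) (TP : PhyloTree VP) (σ : VP → VH)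
    (φ : VP → VH) : Prop :=
  (∀ p, TP.IsLeaf p → φ p = σ p) ∧
  ∀ p p1 p2, TP.ParentArc p p1 → TP.ParentArc p p2 → p1 ≠ p2 →
    SwitchEvent TH (φ p) (φ p1) (φ p2) ∨ CospEvent TH (φ p) (φ p1) (φ p2) ∨
      DupEvent TH (φ p) (φ p1) (φ p2)

/-- `(u,v)` is a switching edge of `P` with respect to `φ` : `u` is the parent of `v` in
`P` and `φ u`, `φ v` are incomparable in `H`. -/
def SwitchingEdge (TH : PhyloTree VH) (TP : PhyloTree VP) (φ : VP → VH) (u v : VP) : Prop :=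
  TP.ParentArc u v ∧ TH.Incomp (φ u) (φ v)

/-- Arc `(a,b)` of `G^φ` : either a (strict) parent-to-child arc of `H`, or a (relaxed)
arc coming, in either direction, from a switching edge. -/
def GphiArc (TH : PhyloTree VH) (TP : PhyloTree VP) (φ : VP → VH) (a b : VH) : Prop :=
  TH.ParentArc a b ∨
    ∃ u v, SwitchingEdge TH TP φ u v ∧ ((a = φ u ∧ b = φ v) ∨ (a = φ v ∧ b = φ u))

/-- `φ` is strongly acyclic: no directed cycle of `G^φ` contains a strict arc. -/
def StronglyAcyclic (TH : PhyloTree VH) (TP : PhyloTree VP) (φ : VP → VH) : Prop :=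
  ¬ ∃ (n : ℕ) (f : ZMod n → VH),
      IsDicycle (GphiArc TH TP φ) f ∧ ∃ i, TH.ParentArc (f i) (f (i + 1))

/-- Arc `(a,b)` of `D^φ` : either an arc of `H`, or an arc from the parent of `φ u` or of
`φ v` (when it exists) to `φ u'` or `φ v'`, for switching edges `(u,v)`, `(u',v')` with
`u` an ancestor of `u'` in `P`. -/
def DphiArc (TH : PhyloTree VH) (TP : PhyloTree VP) (φ : VP → VH) (a b : VH) : Prop :=
  TH.ParentArc a b ∨
    ∃ u v u' v', SwitchingEdge TH TP φ u v ∧ SwitchingEdge TH TP φ u' v' ∧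
      TP.Anc u u' ∧
      ((φ u ≠ TH.root ∧ a = TH.parent (φ u)) ∨ (φ v ≠ TH.root ∧ a = TH.parent (φ v))) ∧
      (b = φ u' ∨ b = φ v')

/-- `φ` is acyclic (time-feasible): `D^φ` contains no directed cycle. -/
def Acyclic (TH : PhyloTree VH) (TP : PhyloTree VP) (φ : VP → VH) : Prop :=
  ¬ ∃ (n : ℕ) (f : ZMod n → VH), IsDicycle (DphiArc TH TP φ) f

end Reconciliation

/-- `G` contains no Type 1 cycle `(h_j, h_k, h_{k1})`, where `h_j`, `h_k` are siblings and
`h_{k1}` is a child of `h_k`. -/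
def NoType1 {V : Type*} [Fintype V] [DecidableEq V] (T : PhyloTree V)
    (G : V → V → Prop) : Prop :=
  ¬ ∃ hj hk hk1, T.Sibling hj hk ∧ T.ParentArc hk hk1 ∧
      G hj hk ∧ G hk hk1 ∧ G hk1 hj

/-- `G` contains no Type 2 cycle `(h_j, h_{j1}, h_k, h_{k1})`, where `h_j`, `h_k` are
siblings, `h_{j1}` is a child of `h_j` and `h_{k1}` is a child of `h_k`. -/
def NoType2 {V : Type*} [Fintype V] [DecidableEq V] (T : PhyloTree V)
    (G : V → V → Prop) : Prop :=
  ¬ ∃ hj hj1 hk hk1, T.Sibling hj hk ∧ T.ParentArc hj hj1 ∧ T.ParentArc hk hk1 ∧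
      G hj hj1 ∧ G hj1 hk ∧ G hk hk1 ∧ G hk1 hj

/-- `G` contains no Type 3 cycle `(h_j, h_{k1}, h_{k3}, h_{k2})`, where `h_j`, `h_k` are
siblings, `h_{k1}`, `h_{k2}` are the children of `h_k`, and `h_{k3}` is a child of
`h_{k1}`. -/
def NoType3 {V : Type*} [Fintype V] [DecidableEq V] (T : PhyloTree V)
    (G : V → V → Prop) : Prop :=
  ¬ ∃ hj hk hk1 hk2 hk3, T.Sibling hj hk ∧ hk1 ≠ hk2 ∧
      T.ParentArc hk hk1 ∧ T.ParentArc hk hk2 ∧ T.ParentArc hk1 hk3 ∧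
      G hj hk1 ∧ G hk1 hk3 ∧ G hk3 hk2 ∧ G hk2 hj

variable {VH VP : Type*} [Fintype VH] [DecidableEq VH] [Fintype VP] [DecidableEq VP]

/-- Strict arcs let us descend from an ancestor to a descendant. -/
lemma anc_reach (TH : PhyloTree VH) (TP : PhyloTree VP) (φ : VP → VH)
    {a b : VH} (h : TH.Anc a b) :
    Relation.ReflTransGen (GphiArc TH TP φ) a b := by
  obtain ⟨n, hn⟩ := h
  induction n generalizing b with
  | zero => simp at hn; exact hn ▸ Relation.ReflTransGen.refl
  | succ n ih =>
    by_cases hb : b = TH.root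
    · subst hb
      rw [Function.iterate_fixed TH.parent_root] at hn
      exact hn ▸ Relation.ReflTransGen.refl
    · rw [Function.iterate_succ_apply] at hn
      exact (ih hn).tail (Or.inl ⟨rfl, hb⟩)

/-- A child of an internal node has a sibling. -/
lemma exists_sibling (TP : PhyloTree VP) {u v : VP} (h : TP.ParentArc u v) :
    ∃ v', TP.ParentArc u v' ∧ v' ≠ v := by
  have hv : v ∈ Finset.univ.filter fun w => TP.parent w = u ∧ w ≠ TP.root := by
    simp [h.1, h.2]
  rcases TP.binary u with h0 | h2
  · exact absurd (Finset.card_eq_zero.mp h0 ▸ hv) (by simp)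
  · have : 1 < (Finset.univ.filter fun w => TP.parent w = u ∧ w ≠ TP.root).card := by
      omega
    obtain ⟨w, hw, hne⟩ := Finset.exists_mem_ne this v
    simp only [Finset.mem_filter] at hw
    exact ⟨w, ⟨hw.2.1, hw.2.2⟩, hne⟩

/-- One step: the image of a parent reaches the image of a child in `G^φ`. -/
lemma gphi_step (TH : PhyloTree VH) (TP : PhyloTree VP) (σ : VP → VH)
    (φ : VP → VH) (hφ : IsReconciliation TH TP σ φ)
    {u v : VP} (huv : TP.ParentArc u v) :
    Relation.ReflTransGen (GphiArc TH TP φ) (φ u) (φ v) := by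
  obtain ⟨v', hv', hne⟩ := exists_sibling TP huv
  have hev := hφ.2 u v v' huv hv' (fun h => hne (h.symm))
  have key : TH.Anc (φ u) (φ v) ∨ TH.Incomp (φ v) (φ u) := by
    rcases hev with (⟨h1, _⟩ | ⟨_, h2⟩) | ⟨_, hlca⟩ | ⟨h1, _⟩
    · exact Or.inr h1
    · exact Or.inl h2
    · exact Or.inl hlca.1
    · exact Or.inl h1
  rcases key with h | h
  · exact anc_reach TH TP φ h
  · refine Relation.ReflTransGen.single (Or.inr ⟨u, v, ⟨huv, ⟨h.2, h.1⟩⟩, Or.inl ⟨rfl, rfl⟩⟩)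

/-- For a reconciliation `φ` of `(H, P, σ)`: whenever `x` is an ancestor
of `y` in `P`, the graph `G^φ` contains a directed path from `φ x` to `φ y`. -/
theorem gphi_path_of_ancestor
    (TH : PhyloTree VH) (TP : PhyloTree VP) (σ : VP → VH)
    (hσ : ∀ p, TP.IsLeaf p → TH.IsLeaf (σ p))
    (φ : VP → VH) (hφ : IsReconciliation TH TP σ φ) :
    ∀ x y : VP, TP.Anc x y →
      Relation.ReflTransGen (GphiArc TH TP φ) (φ x) (φ y) := by
  intro x y ⟨n, hn⟩
  induction n generalizing y with
  | zero => simp at hn; exact hn ▸ Relation.ReflTransGen.refl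
  | succ n ih =>
    by_cases hy : y = TP.root
    · subst hy
      rw [Function.iterate_fixed TP.parent_root] at hn
      exact hn ▸ Relation.ReflTransGen.refl
    · rw [Function.iterate_succ_apply] at hn
      exact (ih _ hn).trans (gphi_step TH TP σ φ hφ ⟨rfl, hy⟩)
end

section
/- Let H and P be phylogenetic trees, let σ be a map from the leaves of P to the leaves of H, and let φ be a reconciliation of (H,P,σ) such that every switching edge (u,v) satisfies d_H(φ(u),φ(v)) ≤ 3. If G^φ contains no directed cycle of Type 1, Type 2, or Type 3, then φ is strongly acyclic, i.e., G^φ contains no directed cycle containing at least one strict arc. -/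
variable {VH VP : Type*} [Fintype VH] [DecidableEq VH] [Fintype VP] [DecidableEq VP]

/-! ### Auxiliary lemmas for the proof -/

namespace PhyloTree

variable {V : Type*} [Fintype V] [DecidableEq V] (T : PhyloTree V)

lemma anc_self (a : V) : T.Anc a a := ⟨0, rfl⟩

lemma root_anc (v : V) : T.Anc T.root v := T.toRoot v

lemma anc_trans {a b c : V} (h1 : T.Anc a b) (h2 : T.Anc b c) : T.Anc a c := by
  obtain ⟨m, hm⟩ := h1; obtain ⟨n, hn⟩ := h2
  exact ⟨m + n, by rw [Function.iterate_add_apply, hn, hm]⟩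

lemma anc_child {v a b : V} (h : T.Anc v a) (hb : T.parent b = a) : T.Anc v b := by
  obtain ⟨n, hn⟩ := h
  exact ⟨n + 1, by rw [Function.iterate_succ_apply, hb, hn]⟩

lemma anc_parent_of_ne {v a : V} (h : T.Anc v a) (hne : a ≠ v) :
    T.Anc v (T.parent a) := by
  obtain ⟨n, hn⟩ := h
  match n, hn with
  | 0, hn => exact absurd hn hne
  | m + 1, hn => exact ⟨m, by rwa [Function.iterate_succ_apply] at hn⟩

lemma parent_eq_self {v : V} (h : T.parent v = v) : v = T.root := by
  obtain ⟨n, hn⟩ := T.toRoot v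
  rwa [Function.iterate_fixed h n] at hn

/-- The depth of a vertex: the number of parent steps to the root. -/
def dep (v : V) : ℕ := Nat.find (T.toRoot v)

lemma dep_spec (v : V) : T.parent^[T.dep v] v = T.root := Nat.find_spec (T.toRoot v)

lemma dep_eq_zero {v : V} (h : T.dep v = 0) : v = T.root := by
  have := T.dep_spec v
  rwa [h, Function.iterate_zero_apply] at this

lemma dep_parent_lt {v : V} (h : v ≠ T.root) : T.dep (T.parent v) < T.dep v := by
  have hs := T.dep_spec v
  have h0 : T.dep v ≠ 0 := fun h0 => h (T.dep_eq_zero h0)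
  obtain ⟨m, hm⟩ := Nat.exists_eq_succ_of_ne_zero h0
  have hroot : T.parent^[m] (T.parent v) = T.root := by
    rw [← Function.iterate_succ_apply, ← hm]; exact hs
  have hle : T.dep (T.parent v) ≤ m := Nat.find_min' _ hroot
  omega

lemma dep_parent_le (v : V) : T.dep (T.parent v) ≤ T.dep v := by
  by_cases h : v = T.root
  · rw [h, T.parent_root]
  · exact (T.dep_parent_lt h).le

lemma dep_le_of_anc {a b : V} (h : T.Anc a b) : T.dep a ≤ T.dep b := by
  obtain ⟨n, hn⟩ := h
  suffices hgen : ∀ (m : ℕ) (c : V), T.parent^[m] c = a → T.dep a ≤ T.dep c from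
    hgen n b hn
  intro m
  induction m with
  | zero =>
    intro c hc
    rw [Function.iterate_zero_apply] at hc
    exact le_of_eq (by rw [hc])
  | succ m ih =>
    intro c hc
    rw [Function.iterate_succ_apply] at hc
    exact le_trans (ih _ hc) (T.dep_parent_le c)

lemma dep_lt_of_anc {a b : V} (h : T.Anc a b) (hne : a ≠ b) : T.dep a < T.dep b := by
  by_cases hb : b = T.root
  · exfalso
    obtain ⟨n, hn⟩ := h
    rw [hb, Function.iterate_fixed T.parent_root] at hn
    exact hne (hn.symm.trans hb.symm ▸ rfl)
  · have hp : T.Anc a (T.parent b) := T.anc_parent_of_ne h (fun hh => hne hh.symm)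
    exact lt_of_le_of_lt (T.dep_le_of_anc hp) (T.dep_parent_lt hb)

lemma anc_antisymm {a b : V} (h1 : T.Anc a b) (h2 : T.Anc b a) : a = b := by
  by_contra hne
  have l1 := T.dep_lt_of_anc h1 hne
  have l2 := T.dep_lt_of_anc h2 (Ne.symm hne)
  omega

lemma sibling_symm {a b : V} (h : T.Sibling a b) : T.Sibling b a :=
  ⟨h.1.symm, h.2.2.1, h.2.1, h.2.2.2.symm⟩

lemma sibling_unique {a b c : V} (h1 : T.Sibling a b) (h2 : T.Sibling a c) : b = c := by
  by_contra hbc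
  have hmem : ∀ w, T.Sibling a w ∨ w = a →
      w ∈ Finset.univ.filter fun u => T.parent u = T.parent a ∧ u ≠ T.root := by
    rintro w (hw | rfl)
    · simp [hw.2.2.2.symm, hw.2.2.1]
    · simp [h1.2.1]
  rcases T.binary (T.parent a) with h0 | h2'
  · have := hmem a (Or.inr rfl)
    rw [Finset.card_eq_zero] at h0
    rw [h0] at this
    simp at this
  · have hsub : ({a, b, c} : Finset V) ⊆
        Finset.univ.filter fun u => T.parent u = T.parent a ∧ u ≠ T.root := by
      intro w hw
      simp only [Finset.mem_insert, Finset.mem_singleton] at hw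
      rcases hw with rfl | rfl | rfl
      · exact hmem w (Or.inr rfl)
      · exact hmem w (Or.inl h1)
      · exact hmem w (Or.inl h2)
    have hcard : ({a, b, c} : Finset V).card = 3 := by
      rw [Finset.card_insert_of_notMem (by simp [h1.1, h2.1]),
        Finset.card_insert_of_notMem (by simp [hbc]), Finset.card_singleton]
    have := Finset.card_le_card hsub
    omega

lemma sibling_not_anc {a b : V} (h : T.Sibling a b) : ¬ T.Anc a b := by
  intro han
  have h1 : T.Anc a (T.parent a) := by
    have := T.anc_parent_of_ne han (fun hh => h.1 hh.symm)
    rwa [← h.2.2.2] at this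
  have h2 : T.Anc (T.parent a) a := ⟨1, by simp⟩
  have heq := T.anc_antisymm h1 h2
  exact h.2.1 (T.parent_eq_self heq.symm)

lemma ugraph_adj_iff {a b : V} :
    T.ugraph.Adj a b ↔ T.ParentArc a b ∨ T.ParentArc b a := Iff.rfl

lemma reachable_root (v : V) : T.ugraph.Reachable v T.root := by
  obtain ⟨n, hn⟩ := T.toRoot v
  induction n generalizing v with
  | zero =>
    rw [Function.iterate_zero_apply] at hn
    rw [hn]
  | succ m ih =>
    by_cases hv : v = T.root
    · rw [hv]
    · have hadj : T.ugraph.Adj v (T.parent v) := Or.inr ⟨rfl, hv⟩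
      rw [Function.iterate_succ_apply] at hn
      exact hadj.reachable.trans (ih _ hn)

/-- Classification of incomparable pairs at undirected distance at most 3: siblings,
or one is the child of a sibling of the other. -/
lemma class3 {a b : V} (hinc : T.Incomp a b) (hd : T.dist a b ≤ 3) :
    T.Sibling a b ∨ (∃ y, T.Sibling y b ∧ T.ParentArc y a) ∨
      (∃ y, T.Sibling y a ∧ T.ParentArc y b) := by
  have hne : a ≠ b := fun h => hinc.1 (h ▸ T.anc_self a)
  have hr : T.ugraph.Reachable a b :=
    (T.reachable_root a).trans (T.reachable_root b).symm
  obtain ⟨p, hp, hlen⟩ := hr.exists_path_of_dist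
  have hl : p.length ≤ 3 := le_trans (le_of_eq hlen) hd
  clear hlen hr hd
  cases p with
  | nil => exact absurd rfl hne
  | cons h1 q =>
    rename_i x
    cases q with
    | nil =>
      rcases T.ugraph_adj_iff.mp h1 with h | h
      · exact absurd (T.anc_child (T.anc_self a) h.1) hinc.1
      · exact absurd (T.anc_child (T.anc_self b) h.1) hinc.2
    | cons h2 q2 =>
      rename_i y
      cases q2 with
      | nil =>
        -- walk a - x - b  (here the walk names the middle vertex x)
        rcases T.ugraph_adj_iff.mp h1 with h1' | h1' <;>
          rcases T.ugraph_adj_iff.mp h2 with h2' | h2'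
        · exact absurd (T.anc_child (T.anc_child (T.anc_self a) h1'.1) h2'.1) hinc.1
        · exact absurd (h1'.1.symm.trans h2'.1) hne
        · exact Or.inl ⟨hne, h1'.2, h2'.2, h1'.1.trans h2'.1.symm⟩
        · exact absurd (T.anc_child (T.anc_child (T.anc_self b) h2'.1) h1'.1) hinc.2
      | cons h3 q3 =>
        rename_i z
        cases q3 with
        | nil =>
          -- walk a - x - y - b  (middle vertices a, x, y renamed: x, y are x and z here)
          have hnd := hp.support_nodup
          simp only [SimpleGraph.Walk.support_cons, SimpleGraph.Walk.support_nil,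
            List.nodup_cons, List.mem_cons, List.mem_singleton, List.not_mem_nil,
            or_false, not_or, List.nodup_nil, and_true] at hnd
          obtain ⟨⟨hax, hay, hab⟩, ⟨hxy, hxb⟩, hyb⟩ := hnd
          rcases T.ugraph_adj_iff.mp h1 with h1' | h1' <;>
            rcases T.ugraph_adj_iff.mp h2 with h2' | h2' <;>
            rcases T.ugraph_adj_iff.mp h3 with h3' | h3'
          · exact absurd
              (T.anc_child (T.anc_child (T.anc_child (T.anc_self a) h1'.1) h2'.1) h3'.1)
              hinc.1
          · exact absurd (h2'.1.symm.trans h3'.1) hxb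
          · exact absurd (h1'.1.symm.trans h2'.1) hay
          · exact absurd (h1'.1.symm.trans h2'.1) hay
          · exact Or.inr (Or.inr ⟨y, ⟨Ne.symm hay, h2'.2, h1'.2,
              h2'.1.trans h1'.1.symm⟩, h3'⟩)
          · exact absurd (h2'.1.symm.trans h3'.1) hxb
          · exact Or.inr (Or.inl ⟨x, ⟨hxb, h2'.2, h3'.2, h2'.1.trans h3'.1.symm⟩, h1'⟩)
          · exact absurd
              (T.anc_child (T.anc_child (T.anc_child (T.anc_self b) h3'.1) h2'.1) h1'.1)
              hinc.2
        | cons h4 q4 =>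
          simp only [SimpleGraph.Walk.length_cons] at hl
          omega

end PhyloTree

section KeyLemmas

variable {VH VP : Type*} [Fintype VH] [DecidableEq VH] [Fintype VP] [DecidableEq VP]
variable (TH : PhyloTree VH) (TP : PhyloTree VP) (φ : VP → VH)

lemma gphi_classify (hdist : ∀ u v, SwitchingEdge TH TP φ u v → TH.dist (φ u) (φ v) ≤ 3)
    {a b : VH} (h : GphiArc TH TP φ a b) :
    TH.ParentArc a b ∨ (TH.Incomp a b ∧ (TH.Sibling a b ∨
      (∃ y, TH.Sibling y b ∧ TH.ParentArc y a) ∨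
      (∃ y, TH.Sibling y a ∧ TH.ParentArc y b))) := by
  rcases h with h | ⟨u, v, hsw, h⟩
  · exact Or.inl h
  · rcases h with ⟨rfl, rfl⟩ | ⟨rfl, rfl⟩
    · exact Or.inr ⟨hsw.2, TH.class3 hsw.2 (hdist u v hsw)⟩
    · have hinc : TH.Incomp (φ v) (φ u) := ⟨hsw.2.2, hsw.2.1⟩
      have hd : TH.dist (φ v) (φ u) ≤ 3 := by
        show TH.ugraph.dist _ _ ≤ 3
        rw [SimpleGraph.dist_comm]
        exact hdist u v hsw
      exact Or.inr ⟨hinc, TH.class3 hinc hd⟩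

lemma no_arc_into_root (hdist : ∀ u v, SwitchingEdge TH TP φ u v → TH.dist (φ u) (φ v) ≤ 3)
    {a : VH} (h : GphiArc TH TP φ a TH.root) : False := by
  rcases gphi_classify TH TP φ hdist h with h' | ⟨hinc, _⟩
  · exact h'.2 rfl
  · exact hinc.2 (TH.root_anc a)

lemma exit_desc (hdist : ∀ u v, SwitchingEdge TH TP φ u v → TH.dist (φ u) (φ v) ≤ 3)
    {w a b : VH} (harc : GphiArc TH TP φ a b)
    (hwa : TH.Anc w a) (hne : a ≠ w) (hnb : ¬ TH.Anc w b) :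
    TH.ParentArc w a ∧ TH.Sibling w b := by
  rcases gphi_classify TH TP φ hdist harc with hp | ⟨hinc, hsh⟩
  · exact absurd (TH.anc_child hwa hp.1) hnb
  · have hwpa : TH.Anc w (TH.parent a) := TH.anc_parent_of_ne hwa hne
    rcases hsh with hsib | ⟨y, hy, hya⟩ | ⟨y, hy, hyb⟩
    · exact absurd (TH.anc_child hwpa hsib.2.2.2.symm) hnb
    · by_cases hyw : y = w
      · subst hyw; exact ⟨hya, hy⟩
      · have hwy : TH.Anc w y := by rw [← hya.1]; exact hwpa
        have hwpy : TH.Anc w (TH.parent y) := TH.anc_parent_of_ne hwy hyw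
        exact absurd (TH.anc_child hwpy hy.2.2.2.symm) hnb
    · have hwy : TH.Anc w y := TH.anc_child hwpa hy.2.2.2
      exact absurd (TH.anc_child hwy hyb.1) hnb

lemma pred_not_anc (hdist : ∀ u v, SwitchingEdge TH TP φ u v → TH.dist (φ u) (φ v) ≤ 3)
    {q v : VH} (harc : GphiArc TH TP φ q v) (hne : q ≠ v) : ¬ TH.Anc v q := by
  intro h
  rcases gphi_classify TH TP φ hdist harc with hp | ⟨hinc, _⟩
  · exact hne (TH.anc_antisymm ⟨1, by simpa using hp.1⟩ h)
  · exact hinc.2 h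

lemma key_no_path (hdist : ∀ u v, SwitchingEdge TH TP φ u v → TH.dist (φ u) (φ v) ≤ 3)
    (h1 : NoType1 TH (GphiArc TH TP φ)) (h2 : NoType2 TH (GphiArc TH TP φ))
    (h3 : NoType3 TH (GphiArc TH TP φ)) :
    ∀ (k : ℕ) (v : VH), TH.dep v ≤ k → ∀ (L : ℕ) (π : ℕ → VH),
      (∀ j, j < L → GphiArc TH TP φ (π j) (π (j + 1))) →
      TH.Anc v (π 0) → π 0 ≠ v → π L = v → False := by
  intro k
  induction k with
  | zero =>
    intro v hv L π hchain hanc hne hend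
    have hvr : v = TH.root := TH.dep_eq_zero (Nat.le_zero.mp hv)
    have hL : L ≠ 0 := fun h => hne (h ▸ hend)
    have harc := hchain (L - 1) (by omega)
    rw [show L - 1 + 1 = L by omega, hend, hvr] at harc
    exact no_arc_into_root TH TP φ hdist harc
  | succ k ihk =>
    intro v hv L
    induction L using Nat.strong_induction_on with
    | _ L ihL =>
      intro π hchain hanc hne hend
      have hL : L ≠ 0 := fun h => hne (h ▸ hend)
      by_cases hvr : v = TH.root
      · have harc := hchain (L - 1) (by omega)
        rw [show L - 1 + 1 = L by omega, hend, hvr] at harc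
        exact no_arc_into_root TH TP φ hdist harc
      · have hnotv : ∀ j, j < L → π j ≠ v := by
          intro j hj hjv
          rcases Nat.eq_zero_or_pos j with h0 | hpos
          · exact hne (h0 ▸ hjv)
          · exact ihL j hj π (fun m hm => hchain m (by omega)) hanc hne hjv
        have harcL : GphiArc TH TP φ (π (L - 1)) v := by
          have := hchain (L - 1) (by omega)
          rwa [show L - 1 + 1 = L by omega, hend] at this
        have hqnd : ¬ TH.Anc v (π (L - 1)) :=
          pred_not_anc TH TP φ hdist harcL (hnotv (L - 1) (by omega))
        classical
        have hex : ∃ j, ¬ TH.Anc v (π j) := ⟨L - 1, hqnd⟩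
        obtain ⟨j₁, hj₁spec, hj₁min, hj₁le⟩ :
            ∃ j, ¬ TH.Anc v (π j) ∧ (∀ m, m < j → TH.Anc v (π m)) ∧ j ≤ L - 1 :=
          ⟨Nat.find hex, Nat.find_spec hex,
            fun m hm => not_not.mp (Nat.find_min hex hm), Nat.find_min' hex hqnd⟩
        have hj₁pos : j₁ ≠ 0 := fun h => hj₁spec (h ▸ hanc)
        have hprevlt : j₁ - 1 < L := by omega
        have harc1 : GphiArc TH TP φ (π (j₁ - 1)) (π j₁) := by
          have := hchain (j₁ - 1) hprevlt
          rwa [show j₁ - 1 + 1 = j₁ by omega] at this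
        obtain ⟨hc, hs⟩ := exit_desc TH TP φ hdist harc1 (hj₁min (j₁ - 1) (by omega))
          (hnotv _ hprevlt) hj₁spec
        have hancp : TH.Anc (TH.parent v) (π 0) := TH.anc_trans ⟨1, by simp⟩ hanc
        have hdp : TH.dep (TH.parent v) ≤ k := by
          have := TH.dep_parent_lt hvr; omega
        have hnep : π 0 ≠ TH.parent v := by
          intro h
          have ha1 : TH.Anc v (TH.parent v) := h ▸ hanc
          have ha2 : TH.Anc (TH.parent v) v := ⟨1, by simp⟩
          exact hvr (TH.parent_eq_self (TH.anc_antisymm ha2 ha1))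
        rcases gphi_classify TH TP φ hdist harcL with hstrict | ⟨hinc, hshape⟩
        · exact ihk (TH.parent v) hdp (L - 1) π (fun m hm => hchain m (by omega))
            hancp hnep hstrict.1.symm
        · rcases hshape with hsib | ⟨y, hy, hya⟩ | ⟨y, hy, hyv⟩
          · have hq : π j₁ = π (L - 1) := TH.sibling_unique hs (TH.sibling_symm hsib)
            exact h1 ⟨π j₁, v, π (j₁ - 1), TH.sibling_symm hs, hc,
              by rw [hq]; exact harcL, Or.inl hc, harc1⟩
          · have hys : y = π j₁ := TH.sibling_unique (TH.sibling_symm hy) hs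
            refine h2 ⟨v, π (j₁ - 1), π j₁, π (L - 1), hs, hc, ?_, Or.inl hc, harc1,
              Or.inl ?_, harcL⟩
            · rw [← hys]; exact hya
            · rw [← hys]; exact hya
          · have hyp : y = TH.parent v := hyv.1.symm
            subst hyp
            have hsibq : TH.Sibling (TH.parent v) (π (L - 1)) := hy
            have hnq : ¬ TH.Anc (TH.parent v) (π (L - 1)) := TH.sibling_not_anc hsibq
            have hex2 : ∃ j, ¬ TH.Anc (TH.parent v) (π j) := ⟨L - 1, hnq⟩
            obtain ⟨j₂, hj₂spec, hj₂min, hj₂le⟩ :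
                ∃ j, ¬ TH.Anc (TH.parent v) (π j) ∧
                  (∀ m, m < j → TH.Anc (TH.parent v) (π m)) ∧ j ≤ L - 1 :=
              ⟨Nat.find hex2, Nat.find_spec hex2,
                fun m hm => not_not.mp (Nat.find_min hex2 hm), Nat.find_min' hex2 hnq⟩
            have hj₂pos : j₂ ≠ 0 := fun h => hj₂spec (h ▸ hancp)
            have hlt2 : j₂ - 1 < L := by omega
            have harc2 : GphiArc TH TP φ (π (j₂ - 1)) (π j₂) := by
              have := hchain (j₂ - 1) hlt2
              rwa [show j₂ - 1 + 1 = j₂ by omega] at this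
            by_cases hpv : π (j₂ - 1) = TH.parent v
            · exact ihk (TH.parent v) hdp (j₂ - 1) π (fun m hm => hchain m (by omega))
                hancp hnep hpv
            · obtain ⟨hc', hs'⟩ := exit_desc TH TP φ hdist harc2
                (hj₂min (j₂ - 1) (by omega)) hpv hj₂spec
              have hb'q : π j₂ = π (L - 1) := TH.sibling_unique hs' hsibq
              have hsva : TH.Sibling v (π (j₂ - 1)) :=
                ⟨Ne.symm (hnotv _ hlt2), hvr, hc'.2, hc'.1.symm⟩
              have ha's : π (j₂ - 1) = π j₁ := TH.sibling_unique hsva hs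
              refine h3 ⟨π (L - 1), TH.parent v, v, π j₁, π (j₁ - 1),
                TH.sibling_symm hsibq, hs.1, ⟨rfl, hvr⟩,
                ⟨hs.2.2.2.symm, hs.2.2.1⟩, hc, harcL, Or.inl hc, harc1, ?_⟩
              rw [← ha's, ← hb'q]
              exact harc2

end KeyLemmas

/-- Let `φ` be a reconciliation whose switching edges all satisfy
`d_H(φ u, φ v) ≤ 3`. If `G^φ` contains no cycle of Type 1, 2 or 3, then `φ` is strongly
acyclic. -/
theorem dist3_no_short_implies_strongly_acyclic
    (TH : PhyloTree VH) (TP : PhyloTree VP) (σ : VP → VH)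
    (hσ : ∀ p, TP.IsLeaf p → TH.IsLeaf (σ p))
    (φ : VP → VH) (hφ : IsReconciliation TH TP σ φ)
    (hdist : ∀ u v, SwitchingEdge TH TP φ u v → TH.dist (φ u) (φ v) ≤ 3)
    (h1 : NoType1 TH (GphiArc TH TP φ)) (h2 : NoType2 TH (GphiArc TH TP φ))
    (h3 : NoType3 TH (GphiArc TH TP φ)) :
    StronglyAcyclic TH TP φ := by
  rintro ⟨n, f, ⟨hn2, hinj, harcs⟩, i, hpar⟩
  haveI : NeZero n := ⟨by omega⟩
  haveI : Fact (1 < n) := ⟨hn2⟩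
  set π : ℕ → VH := fun j => f (i + 1 + (j : ZMod n)) with hπdef
  have hchain : ∀ j, j < n - 1 → GphiArc TH TP φ (π j) (π (j + 1)) := by
    intro j _
    have hcast : ((j + 1 : ℕ) : ZMod n) = (j : ZMod n) + 1 := by push_cast; ring
    show GphiArc TH TP φ (f (i + 1 + (j : ZMod n))) (f (i + 1 + ((j + 1 : ℕ) : ZMod n)))
    rw [hcast, ← add_assoc]
    exact harcs _
  have h0 : π 0 = f (i + 1) := by simp [hπdef]
  have hend : π (n - 1) = f i := by
    have hc1 : ((n - 1 : ℕ) : ZMod n) + 1 = 0 := by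
      have he : (((n - 1) + 1 : ℕ) : ZMod n) = ((n : ℕ) : ZMod n) := by
        rw [show n - 1 + 1 = n by omega]
      rw [Nat.cast_add, Nat.cast_one] at he
      rw [he, ZMod.natCast_self]
    have hc : ((n - 1 : ℕ) : ZMod n) = -1 := eq_neg_of_add_eq_zero_left hc1
    show f (i + 1 + ((n - 1 : ℕ) : ZMod n)) = f i
    rw [hc, show i + 1 + (-1 : ZMod n) = i by ring]
  have hanc : TH.Anc (f i) (π 0) := by
    rw [h0]; exact ⟨1, by simpa using hpar.1⟩
  have hne : π 0 ≠ f i := by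
    rw [h0]
    intro h
    have heq : i + 1 = i := hinj h
    have h10 : (1 : ZMod n) = 0 := by
      have : i + 1 - i = (0 : ZMod n) := by rw [heq]; ring
      calc (1 : ZMod n) = i + 1 - i := by ring
        _ = 0 := this
    exact one_ne_zero h10
  exact key_no_path TH TP φ hdist h1 h2 h3 (TH.dep (f i)) (f i) le_rfl (n - 1) π
    hchain hanc hne hend
end
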